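/- Let n ≥ 1 and let (k_1, …, k_n) and (k'_1, …, k'_n) be tuples of positive integers, each satisfying k_{i+1} ≥ k_i − 1 for all 1 ≤ i < n and k_n = 1, such that (k'_1, …, k'_n) is a permutation (rearrangement) of (k_1, …, k_n). Then, under the uniform measure on orderings of the 2n socks, the probability that K_j(x(ω)) = k_j for all j equals the probability that K_j(x(ω)) = k'_j for all j; both equal 2^n · n! · (∏_{i=1}^n k_i)/(2n)!. -/

import Mathlib

/-- The path associated with an ordering `ω` of the `2n` socks `{1,…,n} × {0,1}`:
`x 0 = 0`, and the path steps up when a new sock type is drawn and down when the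
drawn type has already occurred. -/
def sockPath (n : ℕ) (ω : Fin (2 * n) → Fin n × Bool) : ℕ → ℤ
  | 0 => 0
  | m + 1 =>
    sockPath n ω m +
      if h : m < 2 * n then
        if ∃ i : Fin (2 * n), (i : ℕ) < m ∧ (ω i).1 = (ω ⟨m, h⟩).1 then -1 else 1
      else 0

/-- `Lseq x j` is `L_j(x)`: `L_0(x) = 0` and
`L_j(x) = min { i > L_{j-1}(x) : x (i+1) = x i - 1 }`. -/
noncomputable def Lseq (x : ℕ → ℤ) : ℕ → ℕ
  | 0 => 0
  | j + 1 => sInf {i : ℕ | Lseq x j < i ∧ x (i + 1) = x i - 1}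

/-- `Kseq x j` is `K_j(x) = x (L_j(x))`. -/
noncomputable def Kseq (x : ℕ → ℤ) (j : ℕ) : ℤ := x (Lseq x j)

/-- A Dyck path of length `2n`: a tuple `(x 1, …, x (2n))` of integers with `x 1 = 1`,
`|x (i+1) - x i| = 1` for `1 ≤ i < 2n`, `x i ≥ 0` for `1 ≤ i ≤ 2n - 1`, and `x (2n) = 0`. -/
def IsDyckPath (n : ℕ) (x : ℕ → ℤ) : Prop :=
  x 1 = 1 ∧ (∀ i, 1 ≤ i → i < 2 * n → |x (i + 1) - x i| = 1) ∧
    (∀ i, 1 ≤ i → i ≤ 2 * n - 1 → 0 ≤ x i) ∧ x (2 * n) = 0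

open Finset

namespace SockAux

attribute [local instance] Classical.propDecidable

variable {n : ℕ}

def IsDown (n : ℕ) (ω : Fin (2*n) → Fin n × Bool) (m : ℕ) : Prop :=
  ∃ h : m < 2*n, ∃ i : Fin (2*n), (i : ℕ) < m ∧ (ω i).1 = (ω ⟨m, h⟩).1

noncomputable def downs (n : ℕ) (ω : Fin (2*n) → Fin n × Bool) : Finset ℕ :=
  (range (2*n)).filter (IsDown n ω)

lemma downs_subset (ω : Fin (2*n) → Fin n × Bool) : downs n ω ⊆ range (2*n) :=
  filter_subset _ _

lemma mem_downs (ω : Fin (2*n) → Fin n × Bool) (m : ℕ) :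
    m ∈ downs n ω ↔ IsDown n ω m := by
  simp only [downs, mem_filter, mem_range]
  constructor
  · exact fun h => h.2
  · intro h
    have hh : m < 2*n := by obtain ⟨hh, -⟩ := h; exact hh
    exact ⟨hh, h⟩

lemma sockPath_succ_lt (ω : Fin (2*n) → Fin n × Bool) {m : ℕ} (h : m < 2*n) :
    sockPath n ω (m+1) = sockPath n ω m + if IsDown n ω m then -1 else 1 := by
  rw [sockPath, dif_pos h]
  congr 1
  by_cases hd : IsDown n ω m
  · rw [if_pos hd, if_pos]
    obtain ⟨h', i, hi⟩ := hd
    exact ⟨i, hi⟩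
  · rw [if_neg hd, if_neg]
    intro hi
    exact hd ⟨h, hi⟩

lemma sockPath_succ_ge (ω : Fin (2*n) → Fin n × Bool) {m : ℕ} (h : 2*n ≤ m) :
    sockPath n ω (m+1) = sockPath n ω m := by
  rw [sockPath, dif_neg (by omega), add_zero]

lemma step_down_iff (ω : Fin (2*n) → Fin n × Bool) (m : ℕ) :
    sockPath n ω (m+1) = sockPath n ω m - 1 ↔ m ∈ downs n ω := by
  rw [mem_downs]
  by_cases h : m < 2*n
  · rw [sockPath_succ_lt ω h]
    by_cases hd : IsDown n ω m
    · simp [hd, sub_eq_add_neg]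
    · simp only [hd, if_neg, iff_false, if_false]
      intro he
      omega
  · rw [sockPath_succ_ge ω (by omega)]
    constructor
    · intro he; omega
    · rintro ⟨h', -⟩; omega

lemma sockPath_height (ω : Fin (2*n) → Fin n × Bool) (m : ℕ) (hm : m ≤ 2*n) :
    sockPath n ω m = (m : ℤ) - 2 * ((downs n ω).filter (· < m)).card := by
  induction m with
  | zero => simp [sockPath]
  | succ m ih =>
    have hm' : m < 2*n := by omega
    have hfe : (downs n ω).filter (· < m + 1) =
        if m ∈ downs n ω then insert m ((downs n ω).filter (· < m))
        else (downs n ω).filter (· < m) := by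
      split_ifs with h
      · ext a
        simp only [mem_filter, mem_insert]
        constructor
        · rintro ⟨ha, hlt⟩
          rcases Nat.lt_succ_iff_lt_or_eq.mp hlt with h' | h'
          · exact Or.inr ⟨ha, h'⟩
          · exact Or.inl h'
        · rintro (rfl | ⟨ha, hlt⟩)
          · exact ⟨h, Nat.lt_succ_self _⟩
          · exact ⟨ha, Nat.lt_succ_of_lt hlt⟩
      · ext a
        simp only [mem_filter]
        constructor
        · rintro ⟨ha, hlt⟩
          refine ⟨ha, ?_⟩
          rcases Nat.lt_succ_iff_lt_or_eq.mp hlt with h' | rfl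
          · exact h'
          · exact absurd ha h
        · rintro ⟨ha, hlt⟩
          exact ⟨ha, Nat.lt_succ_of_lt hlt⟩
    rw [sockPath_succ_lt ω hm', ih (by omega), hfe]
    by_cases h : m ∈ downs n ω
    · rw [if_pos h, if_pos ((mem_downs ω m).mp h),
        card_insert_of_notMem (by simp)]
      push_cast; ring
    · rw [if_neg h, if_neg (fun hd => h ((mem_downs ω m).mpr hd))]
      push_cast; ring

lemma type_occ_le_two {α : Type*} [DecidableEq α] (g : α → Fin n × Bool)
    (hg : Function.Injective g) (s : Finset α) (t : Fin n) :
    (s.filter (fun i => (g i).1 = t)).card ≤ 2 := by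
  calc (s.filter (fun i => (g i).1 = t)).card
      ≤ (({t} : Finset (Fin n)) ×ˢ (univ : Finset Bool)).card := by
        apply card_le_card_of_injOn g
        · intro a ha
          simp only [coe_filter, Set.mem_setOf_eq] at ha
          rw [Finset.mem_coe, Finset.mem_product]
          exact ⟨by simp [ha.2], mem_univ _⟩
        · exact fun a _ b _ h => hg h
    _ = 2 := by simp

lemma card_downs (ω : Fin (2*n) ≃ Fin n × Bool) : (downs n ⇑ω).card = n := by
  have : (downs n ⇑ω).card = (univ : Finset (Fin n)).card := by
    apply card_bij (fun m hm => (ω ⟨m, mem_range.mp (downs_subset _ hm)⟩).1)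
    · intros; exact mem_univ _
    · intro m1 hm1 m2 hm2 heq
      by_contra hne
      obtain ⟨h1, i1, hi1, ht1⟩ := (mem_downs _ _).mp hm1
      obtain ⟨h2, i2, hi2, ht2⟩ := (mem_downs _ _).mp hm2
      -- wlog m1 < m2
      rcases Nat.lt_or_ge m1 m2 with hlt | hge
      · -- i1 < m1 < m2 all of same type
        set t := (ω ⟨m2, h2⟩).1 with htdef
        have e1 : (ω i1).1 = t := by rw [ht1]; exact heq
        have e2 : (ω ⟨m1, h1⟩).1 = t := heq
        have : ({i1, ⟨m1,h1⟩, ⟨m2,h2⟩} : Finset (Fin (2*n))).card ≤ 2 := by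
          have := type_occ_le_two ⇑ω ω.injective {i1, ⟨m1,h1⟩, ⟨m2,h2⟩} t
          refine le_trans (le_of_eq ?_) this
          rw [filter_true_of_mem]
          intro a ha
          simp only [mem_insert, mem_singleton] at ha
          rcases ha with rfl | rfl | rfl
          · exact e1
          · exact e2
          · rfl
        rw [card_insert_of_notMem, card_insert_of_notMem, card_singleton] at this
        · omega
        · simp only [mem_singleton]
          intro h; apply absurd (congrArg Fin.val h); simp; omega
        · simp only [mem_insert, mem_singleton]
          push_neg
          constructor <;> (intro h; apply absurd (congrArg Fin.val h); simp; omega)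
      · rcases Nat.lt_or_ge m2 m1 with hlt | hge2
        · set t := (ω ⟨m1, h1⟩).1 with htdef
          have e1 : (ω i2).1 = t := by rw [ht2]; exact heq.symm
          have e2 : (ω ⟨m2, h2⟩).1 = t := heq.symm
          have : ({i2, ⟨m2,h2⟩, ⟨m1,h1⟩} : Finset (Fin (2*n))).card ≤ 2 := by
            have := type_occ_le_two ⇑ω ω.injective {i2, ⟨m2,h2⟩, ⟨m1,h1⟩} t
            refine le_trans (le_of_eq ?_) this
            rw [filter_true_of_mem]
            intro a ha
            simp only [mem_insert, mem_singleton] at ha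
            rcases ha with rfl | rfl | rfl
            · exact e1
            · exact e2
            · rfl
          rw [card_insert_of_notMem, card_insert_of_notMem, card_singleton] at this
          · omega
          · simp only [mem_singleton]
            intro h; apply absurd (congrArg Fin.val h); simp; omega
          · simp only [mem_insert, mem_singleton]
            push_neg
            constructor <;> (intro h; apply absurd (congrArg Fin.val h); simp; omega)
        · exact hne (by omega)
    · intro t _
      set a := ω.symm (t, false) with ha
      set b := ω.symm (t, true) with hb
      have hab : a ≠ b := by
        intro h
        have := congrArg ω h
        simp [ha, hb] at this
      rcases Nat.lt_or_ge (a : ℕ) (b : ℕ) with hlt | hge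
      · refine ⟨(b : ℕ), ?_, ?_⟩
        · rw [mem_downs]
          refine ⟨b.isLt, a, hlt, ?_⟩
          simp [ha, hb, Fin.eta]
        · simp [hb, Fin.eta]
      · have hlt : (b : ℕ) < (a : ℕ) := by
          rcases Nat.lt_or_ge (b:ℕ) (a:ℕ) with h | h
          · exact h
          · exfalso; exact hab (Fin.ext (by omega))
        refine ⟨(a : ℕ), ?_, ?_⟩
        · rw [mem_downs]
          refine ⟨a.isLt, b, hlt, ?_⟩
          simp [ha, hb, Fin.eta]
        · simp [ha, Fin.eta]
  simpa using this


lemma zero_not_mem_downs (ω : Fin (2*n) → Fin n × Bool) : 0 ∉ downs n ω := by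
  rw [mem_downs]
  rintro ⟨h, i, hi, -⟩
  omega

lemma lseq_step (ω : Fin (2*n) → Fin n × Bool) (a : ℕ)
    (hne : ((downs n ω).filter (fun i => a < i)).Nonempty) :
    sInf {i : ℕ | a < i ∧ sockPath n ω (i + 1) = sockPath n ω i - 1} =
      ((downs n ω).filter (fun i => a < i)).min' hne := by
  have hset : {i : ℕ | a < i ∧ sockPath n ω (i + 1) = sockPath n ω i - 1} =
      {i : ℕ | i ∈ (downs n ω).filter (fun i => a < i)} := by
    ext i
    simp only [Set.mem_setOf_eq, mem_filter, step_down_iff]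
    tauto
  rw [hset]
  apply le_antisymm
  · exact Nat.sInf_le (by simpa using min'_mem _ hne)
  · have hmem : sInf {i : ℕ | i ∈ (downs n ω).filter (fun i => a < i)} ∈
        (downs n ω).filter (fun i => a < i) := by
      have : {i : ℕ | i ∈ (downs n ω).filter (fun i => a < i)}.Nonempty := by
        obtain ⟨b, hb⟩ := hne
        exact ⟨b, hb⟩
      simpa using Nat.sInf_mem this
    exact min'_le _ _ hmem

lemma lseq_spec (ω : Fin (2*n) ≃ Fin n × Bool) :
    ∀ j, j ≤ n →
      ((downs n ⇑ω).filter (fun i => i ≤ Lseq (sockPath n ⇑ω) j)).card = j ∧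
      (1 ≤ j → Lseq (sockPath n ⇑ω) j ∈ downs n ⇑ω) := by
  intro j
  induction j with
  | zero =>
    intro _
    refine ⟨?_, by omega⟩
    rw [show Lseq (sockPath n ⇑ω) 0 = 0 from rfl]
    rw [filter_eq_empty_iff.mpr, card_empty]
    intro d hd
    simp only [Nat.le_zero]
    intro h0
    exact zero_not_mem_downs ⇑ω (h0 ▸ hd)
  | succ j ih =>
    intro hj1
    obtain ⟨hc, -⟩ := ih (by omega)
    set x := sockPath n ⇑ω with hx
    set L := Lseq x j with hL
    have hsum := Finset.card_filter_add_card_filter_not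
      (s := downs n ⇑ω) (p := fun i => i ≤ L)
    have hneg : ((downs n ⇑ω).filter (fun i => ¬ i ≤ L)) =
        ((downs n ⇑ω).filter (fun i => L < i)) := by
      apply filter_congr; intro i _; omega
    rw [hneg, card_downs ω, hc] at hsum
    have hne : ((downs n ⇑ω).filter (fun i => L < i)).Nonempty := by
      rw [← card_pos]; omega
    have hL1 : Lseq x (j+1) = ((downs n ⇑ω).filter (fun i => L < i)).min' hne := by
      rw [Lseq]
      exact lseq_step ⇑ω L hne
    have hmem := min'_mem _ hne
    rw [← hL1] at hmem
    rw [mem_filter] at hmem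
    obtain ⟨hmem1, hmem2⟩ := hmem
    constructor
    · have : (downs n ⇑ω).filter (fun i => i ≤ Lseq x (j+1)) =
          insert (Lseq x (j+1)) ((downs n ⇑ω).filter (fun i => i ≤ L)) := by
        ext d
        simp only [mem_filter, mem_insert]
        constructor
        · rintro ⟨hd, hdle⟩
          by_cases h' : d ≤ L
          · exact Or.inr ⟨hd, h'⟩
          · left
            have : L < d := by omega
            have := min'_le _ d (mem_filter.mpr ⟨hd, this⟩)
            rw [← hL1] at this
            omega
        · rintro (rfl | ⟨hd, hdle⟩)
          · exact ⟨hmem1, le_refl _⟩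
          · exact ⟨hd, by omega⟩
      rw [this, card_insert_of_notMem, hc]
      simp only [mem_filter]
      rintro ⟨-, hcon⟩
      omega
    · intro _
      exact hmem1

lemma lseq_card_lt (ω : Fin (2*n) ≃ Fin n × Bool) {j : ℕ} (hj1 : 1 ≤ j) (hj2 : j ≤ n) :
    ((downs n ⇑ω).filter (fun i => i < Lseq (sockPath n ⇑ω) j)).card = j - 1 := by
  obtain ⟨hc, hmem⟩ := lseq_spec ω j hj2
  have hmem := hmem hj1
  have : (downs n ⇑ω).filter (fun i => i ≤ Lseq (sockPath n ⇑ω) j) =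
      insert (Lseq (sockPath n ⇑ω) j)
        ((downs n ⇑ω).filter (fun i => i < Lseq (sockPath n ⇑ω) j)) := by
    ext d
    simp only [mem_filter, mem_insert]
    constructor
    · rintro ⟨hd, hdle⟩
      rcases Nat.lt_or_ge d (Lseq (sockPath n ⇑ω) j) with h' | h'
      · exact Or.inr ⟨hd, h'⟩
      · exact Or.inl (by omega)
    · rintro (rfl | ⟨hd, hdlt⟩)
      · exact ⟨hmem, le_refl _⟩
      · exact ⟨hd, by omega⟩
  rw [this, card_insert_of_notMem (by simp)] at hc
  omega

lemma kseq_char (ω : Fin (2*n) ≃ Fin n × Bool) {j : ℕ} (hj1 : 1 ≤ j) (hj2 : j ≤ n) :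
    Kseq (sockPath n ⇑ω) j = (Lseq (sockPath n ⇑ω) j : ℤ) - 2 * (j - 1 : ℕ) := by
  obtain ⟨-, hmem⟩ := lseq_spec ω j hj2
  have hmem := hmem hj1
  have hlt : Lseq (sockPath n ⇑ω) j < 2*n := mem_range.mp (downs_subset _ hmem)
  rw [Kseq, sockPath_height ⇑ω _ (le_of_lt hlt), lseq_card_lt ω hj1 hj2]


def D (k : ℕ → ℕ) (j : ℕ) : ℕ := 2*(j-1) + k j

noncomputable def Dset (n : ℕ) (k : ℕ → ℕ) : Finset ℕ := (Icc 1 n).image (D k)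

variable {k : ℕ → ℕ}

lemma D_adj (hcond : ∀ i, 1 ≤ i → i < n → k i ≤ k (i+1) + 1) {j : ℕ}
    (h1 : 1 ≤ j) (h2 : j < n) : D k j < D k (j+1) := by
  have := hcond j h1 h2
  unfold D
  omega

lemma D_mono (hcond : ∀ i, 1 ≤ i → i < n → k i ≤ k (i+1) + 1) :
    ∀ j1 j2, 1 ≤ j1 → j2 ≤ n → j1 < j2 → D k j1 < D k j2 := by
  intro j1 j2 h1
  induction j2 with
  | zero => omega
  | succ m ihm =>
    intro h2 hlt
    rcases Nat.lt_or_ge j1 m with h' | h'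
    · exact lt_trans (ihm (by omega) h') (D_adj hcond (by omega) (by omega))
    · have : j1 = m := by omega
      subst this
      exact D_adj hcond h1 (by omega)

lemma D_injOn (hcond : ∀ i, 1 ≤ i → i < n → k i ≤ k (i+1) + 1) :
    Set.InjOn (D k) (Icc 1 n) := by
  intro a ha b hb hab
  simp only [coe_Icc, Set.mem_Icc] at ha hb
  rcases lt_trichotomy a b with h | h | h
  · exact absurd hab (ne_of_lt (D_mono hcond a b ha.1 hb.2 h))
  · exact h
  · exact absurd hab.symm (ne_of_lt (D_mono hcond b a hb.1 ha.2 h))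

lemma card_Dset (hcond : ∀ i, 1 ≤ i → i < n → k i ≤ k (i+1) + 1) :
    (Dset n k).card = n := by
  rw [Dset, card_image_of_injOn (D_injOn hcond), Nat.card_Icc]
  omega

lemma Dset_lt (hn : 1 ≤ n) (hcond : ∀ i, 1 ≤ i → i < n → k i ≤ k (i+1) + 1)
    (hlast : k n = 1) {m : ℕ} (hm : m ∈ Dset n k) : m < 2*n := by
  obtain ⟨j, hj, rfl⟩ := mem_image.mp hm
  rw [mem_Icc] at hj
  have hDn : D k n = 2*n - 1 := by unfold D; omega
  rcases Nat.lt_or_ge j n with h | h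
  · have := D_mono hcond j n hj.1 (le_refl n) h
    omega
  · have : j = n := by omega
    subst this
    omega

lemma Dset_filter_card (hcond : ∀ i, 1 ≤ i → i < n → k i ≤ k (i+1) + 1)
    {j : ℕ} (h1 : 1 ≤ j) (h2 : j ≤ n) :
    ((Dset n k).filter (fun i => i < D k j)).card = j - 1 := by
  have himg : (Dset n k).filter (fun i => i < D k j) = (Icc 1 (j-1)).image (D k) := by
    ext m
    simp only [mem_filter, Dset, mem_image, mem_Icc]
    constructor
    · rintro ⟨⟨j', hj', rfl⟩, hlt⟩
      refine ⟨j', ⟨hj'.1, ?_⟩, rfl⟩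
      by_contra hcon
      have : j ≤ j' := by omega
      rcases Nat.lt_or_ge j j' with h' | h'
      · exact absurd (D_mono hcond j j' h1 hj'.2 h') (by omega)
      · have : j = j' := by omega
        subst this
        omega
    · rintro ⟨j', hj', rfl⟩
      refine ⟨⟨j', ⟨hj'.1, by omega⟩, rfl⟩, ?_⟩
      exact D_mono hcond j' j hj'.1 h2 (by omega)
  rw [himg, card_image_of_injOn, Nat.card_Icc]
  · omega
  · apply Set.InjOn.mono _ (D_injOn hcond)
    intro a ha
    simp only [coe_Icc, Set.mem_Icc] at ha ⊢
    omega

lemma key_iff (hn : 1 ≤ n) (hcond : ∀ i, 1 ≤ i → i < n → k i ≤ k (i+1) + 1)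
    (ω : Fin (2*n) ≃ Fin n × Bool) :
    (∀ j, 1 ≤ j → j ≤ n → Kseq (sockPath n ⇑ω) j = (k j : ℤ)) ↔
      downs n ⇑ω = Dset n k := by
  constructor
  · intro hK
    have hLeq : ∀ j, 1 ≤ j → j ≤ n → Lseq (sockPath n ⇑ω) j = D k j := by
      intro j h1 h2
      have h := kseq_char ω h1 h2
      rw [hK j h1 h2] at h
      unfold D
      omega
    symm
    apply Finset.eq_of_subset_of_card_le
    · intro m hm
      obtain ⟨j, hj, rfl⟩ := mem_image.mp hm
      rw [mem_Icc] at hj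
      rw [← hLeq j hj.1 hj.2]
      exact (lseq_spec ω j hj.2).2 hj.1
    · rw [card_downs ω, card_Dset hcond]
  · intro hdowns j h1 h2
    have hmem : Lseq (sockPath n ⇑ω) j ∈ Dset n k := by
      rw [← hdowns]
      exact (lseq_spec ω j h2).2 h1
    obtain ⟨j', hj', hDj'⟩ := mem_image.mp hmem
    rw [mem_Icc] at hj'
    have hcardL := lseq_card_lt ω h1 h2
    rw [hdowns, ← hDj'] at hcardL
    rw [Dset_filter_card hcond hj'.1 hj'.2] at hcardL
    have hjj : j = j' := by omega
    subst hjj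
    have h := kseq_char ω h1 h2
    rw [← hDj'] at h
    rw [h]
    unfold D
    push_cast
    omega

-- Counting section
variable (T : Finset ℕ)

def Word (n : ℕ) (T : Finset ℕ) (m : ℕ) (f : Fin m → Fin n × Bool) : Prop :=
  Function.Injective f ∧
    ∀ i : Fin m, ((∃ i' : Fin m, (i' : ℕ) < (i : ℕ) ∧ (f i').1 = (f i).1) ↔ (i : ℕ) ∈ T)

noncomputable def E (n : ℕ) (T : Finset ℕ) (m : ℕ) : Finset (Fin m → Fin n × Bool) :=
  univ.filter (Word n T m)

def dct (T : Finset ℕ) (m : ℕ) : ℕ := (T.filter (fun i => i < m)).card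

def cstep (n : ℕ) (T : Finset ℕ) (m : ℕ) : ℕ :=
  if m ∈ T then 2 * (m - dct T m) - m else 2 * (n - (m - dct T m))

lemma dct_le (T : Finset ℕ) (m : ℕ) : dct T m ≤ m := by
  have : T.filter (fun i => i < m) ⊆ range m := by
    intro a ha
    rw [mem_range]
    exact (mem_filter.mp ha).2
  simpa [dct] using le_trans (card_le_card this) (le_of_eq (card_range m))

lemma card_downPos (m : ℕ) :
    (Finset.filter (fun i : Fin m => (i : ℕ) ∈ T) univ).card = dct T m := by
  rw [dct]
  apply card_bij (fun (i : Fin m) _ => (i : ℕ))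
  · intro i hi
    rw [mem_filter] at hi ⊢
    exact ⟨hi.2, i.isLt⟩
  · intro i _ i' _ h
    exact Fin.ext h
  · intro a ha
    rw [mem_filter] at ha
    exact ⟨(⟨a, ha.2⟩ : Fin m), by rw [mem_filter]; exact ⟨mem_univ _, ha.1⟩, rfl⟩

lemma card_upPos (m : ℕ) :
    (Finset.filter (fun i : Fin m => (i : ℕ) ∉ T) univ).card = m - dct T m := by
  have hsum := Finset.card_filter_add_card_filter_not
    (s := (univ : Finset (Fin m))) (p := fun i : Fin m => (i : ℕ) ∈ T)
  rw [card_downPos T m, card_univ, Fintype.card_fin] at hsum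
  omega

lemma types_card {n m : ℕ} {g : Fin m → Fin n × Bool} (hg : Word n T m g) :
    ((univ : Finset (Fin m)).image (fun i => (g i).1)).card = m - dct T m := by
  rw [← card_upPos T m]
  symm
  apply card_bij (fun (i : Fin m) _ => (g i).1)
  · intro i _
    exact mem_image.mpr ⟨i, mem_univ _, rfl⟩
  · intro i1 hi1 i2 hi2 heq
    rw [mem_filter] at hi1 hi2
    by_contra hne
    rcases lt_trichotomy i1 i2 with h | h | h
    · exact hi2.2 ((hg.2 i2).mp ⟨i1, h, heq⟩)
    · exact hne h
    · exact hi1.2 ((hg.2 i1).mp ⟨i2, h, heq.symm⟩)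
  · intro t ht
    obtain ⟨i0, -, rfl⟩ := mem_image.mp ht
    have hsne : ((univ : Finset (Fin m)).filter (fun i => (g i).1 = (g i0).1)).Nonempty :=
      ⟨i0, by rw [mem_filter]; exact ⟨mem_univ _, rfl⟩⟩
    have himem := min'_mem _ hsne
    rw [mem_filter] at himem
    refine ⟨_, ?_, himem.2⟩
    rw [mem_filter]
    refine ⟨mem_univ _, ?_⟩
    intro hT
    obtain ⟨i', hi', heq'⟩ := (hg.2 _).mpr hT
    have hmem' : i' ∈ (univ : Finset (Fin m)).filter (fun i => (g i).1 = (g i0).1) := by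
      rw [mem_filter]
      exact ⟨mem_univ _, by rw [heq', himem.2]⟩
    have := min'_le _ i' hmem'
    have : (i' : ℕ) < (i' : ℕ) := lt_of_lt_of_le hi' this
    omega

noncomputable def VN {n m : ℕ} (T : Finset ℕ) (g : Fin m → Fin n × Bool) :
    Finset (Fin n × Bool) :=
  univ.filter (fun a => (∀ i, g i ≠ a) ∧ ((∃ i, (g i).1 = a.1) ↔ m ∈ T))

lemma VN_card {n m : ℕ} {g : Fin m → Fin n × Bool} (hg : Word n T m g) :
    (VN T g).card = cstep n T m := by
  have hct := types_card T hg
  by_cases hm : m ∈ T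
  · have hVN : VN T g =
        (((univ : Finset (Fin m)).image (fun i => (g i).1)) ×ˢ (univ : Finset Bool)) \
          (univ.image g) := by
      ext a
      rw [VN, mem_filter, mem_sdiff, Finset.mem_product]
      constructor
      · rintro ⟨-, hne, hiff⟩
        obtain ⟨i, hi⟩ := hiff.mpr hm
        refine ⟨⟨mem_image.mpr ⟨i, mem_univ _, hi⟩, mem_univ _⟩, ?_⟩
        intro hmem
        obtain ⟨i', -, hgi'⟩ := mem_image.mp hmem
        exact hne i' hgi'
      · rintro ⟨⟨hat, -⟩, hnr⟩
        obtain ⟨i, -, hi⟩ := mem_image.mp hat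
        exact ⟨mem_univ _, fun i' hgi' => hnr (mem_image.mpr ⟨i', mem_univ _, hgi'⟩),
          ⟨fun _ => hm, fun _ => ⟨i, hi⟩⟩⟩
    have h1 : ((((univ : Finset (Fin m)).image (fun i => (g i).1)) ×ˢ
        (univ : Finset Bool))).card = 2 * (m - dct T m) := by
      rw [Finset.card_product, hct, card_univ, Fintype.card_bool, mul_comm]
    have h2 : ((univ : Finset (Fin m)).image g).card = m := by
      rw [card_image_of_injective _ hg.1, card_univ, Fintype.card_fin]
    rw [hVN, card_sdiff_of_subset, h1, h2, cstep, if_pos hm]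
    intro a ha
    obtain ⟨i, -, rfl⟩ := mem_image.mp ha
    rw [Finset.mem_product]
    exact ⟨mem_image.mpr ⟨i, mem_univ _, rfl⟩, mem_univ _⟩
  · have hVN : VN T g =
        ((univ : Finset (Fin n)) \ ((univ : Finset (Fin m)).image (fun i => (g i).1))) ×ˢ
          (univ : Finset Bool) := by
      ext a
      rw [VN, mem_filter, Finset.mem_product, mem_sdiff]
      constructor
      · rintro ⟨-, hne, hiff⟩
        refine ⟨⟨mem_univ _, ?_⟩, mem_univ _⟩
        intro hat
        obtain ⟨i, -, hi⟩ := mem_image.mp hat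
        exact hm (hiff.mp ⟨i, hi⟩)
      · rintro ⟨⟨-, hnt⟩, -⟩
        refine ⟨mem_univ _, ?_, ?_⟩
        · intro i hgi
          exact hnt (mem_image.mpr ⟨i, mem_univ _, by rw [hgi]⟩)
        · constructor
          · rintro ⟨i, hi⟩
            exact absurd (mem_image.mpr ⟨i, mem_univ _, hi⟩) hnt
          · intro h
            exact absurd h hm
    rw [hVN, Finset.card_product, card_sdiff_of_subset (subset_univ _), hct, cstep, if_neg hm,
      card_univ, card_univ, Fintype.card_fin, Fintype.card_bool, mul_comm]

lemma mem_E {n m : ℕ} {f : Fin m → Fin n × Bool} : f ∈ E n T m ↔ Word n T m f := by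
  rw [E, mem_filter]
  exact ⟨fun h => h.2, fun h => ⟨mem_univ _, h⟩⟩

lemma E_zero (n : ℕ) : (E n T 0).card = 1 := by
  rw [E, filter_true_of_mem]
  · rw [card_univ]
    simp
  · intro f _
    exact ⟨fun a => a.elim0, fun i => i.elim0⟩

lemma E_succ (n : ℕ) (m : ℕ) : (E n T (m+1)).card = (E n T m).card * cstep n T m := by
  have hcard : (E n T (m+1)).card =
      ((E n T m).sigma (fun g => VN T g)).card := by
    apply card_nbij' (fun f => ⟨fun i => f i.castSucc, f (Fin.last m)⟩)
      (fun p => Fin.snoc p.1 p.2)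
    · -- forward maps into sigma
      intro f hf
      rw [Finset.mem_coe, mem_E] at hf
      rw [Finset.mem_coe, Finset.mem_sigma]
      constructor
      · rw [mem_E]
        constructor
        · intro i j h
          exact Fin.castSucc_injective m (hf.1 h)
        · intro i
          constructor
          · rintro ⟨i', h1, h2⟩
            have := (hf.2 i.castSucc).mp ⟨i'.castSucc, by simpa using h1, h2⟩
            simpa using this
          · intro hT
            obtain ⟨i'', h1, h2⟩ := (hf.2 i.castSucc).mpr (by simpa using hT)
            rw [Fin.coe_castSucc] at h1
            exact ⟨⟨(i'' : ℕ), lt_trans h1 i.isLt⟩, h1, h2⟩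
      · rw [VN, mem_filter]
        refine ⟨mem_univ _, ?_, ?_⟩
        · intro i h
          have := hf.1 h
          have : (i.castSucc : ℕ) = (Fin.last m : ℕ) := by rw [this]
          simp only [Fin.coe_castSucc, Fin.val_last] at this
          omega
        · have hlast := hf.2 (Fin.last m)
          rw [Fin.val_last] at hlast
          rw [← hlast]
          constructor
          · rintro ⟨i, hi⟩
            exact ⟨i.castSucc, by simp, hi⟩
          · rintro ⟨i'', h1, h2⟩
            exact ⟨⟨(i'' : ℕ), h1⟩, h2⟩
    · -- backward maps into E (m+1)
      rintro ⟨g, a⟩ hp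
      rw [Finset.mem_coe, Finset.mem_sigma] at hp
      obtain ⟨hg, ha⟩ := hp
      rw [mem_E] at hg
      rw [VN, mem_filter] at ha
      obtain ⟨-, hne, hiff⟩ := ha
      rw [Finset.mem_coe, mem_E]
      dsimp only at hg hne hiff ⊢
      constructor
      · -- injectivity of snoc
        intro i j h
        induction i using Fin.lastCases with
        | last =>
          induction j using Fin.lastCases with
          | last => rfl
          | cast j' =>
            rw [Fin.snoc_last, Fin.snoc_castSucc] at h
            exact absurd h.symm (hne j')
        | cast i' =>
          induction j using Fin.lastCases with
          | last =>
            rw [Fin.snoc_last, Fin.snoc_castSucc] at h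
            exact absurd h (hne i')
          | cast j' =>
            rw [Fin.snoc_castSucc, Fin.snoc_castSucc] at h
            rw [hg.1 h]
      · intro i
        induction i using Fin.lastCases with
        | last =>
          rw [Fin.snoc_last, Fin.val_last]
          rw [← hiff]
          constructor
          · rintro ⟨i'', h1, h2⟩
            have he : i'' = Fin.castSucc (⟨(i'' : ℕ), h1⟩ : Fin m) := Fin.ext rfl
            rw [he, Fin.snoc_castSucc] at h2
            exact ⟨⟨(i'' : ℕ), h1⟩, h2⟩
          · rintro ⟨i', hi'⟩
            refine ⟨i'.castSucc, by simp, ?_⟩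
            rw [Fin.snoc_castSucc]
            exact hi'
        | cast i0 =>
          rw [Fin.snoc_castSucc, Fin.coe_castSucc]
          rw [← hg.2 i0]
          constructor
          · rintro ⟨i'', h1, h2⟩
            have h1m : (i'' : ℕ) < m := lt_trans h1 i0.isLt
            have he : i'' = Fin.castSucc (⟨(i'' : ℕ), h1m⟩ : Fin m) := Fin.ext rfl
            rw [he, Fin.snoc_castSucc] at h2
            exact ⟨⟨(i'' : ℕ), h1m⟩, h1, h2⟩
          · rintro ⟨i', h1, h2⟩
            refine ⟨i'.castSucc, by simpa using h1, ?_⟩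
            rw [Fin.snoc_castSucc]
            exact h2
    · -- left inverse
      intro f _
      funext i
      induction i using Fin.lastCases with
      | last => dsimp only; rw [Fin.snoc_last]
      | cast i' => dsimp only; rw [Fin.snoc_castSucc]
    · -- right inverse
      rintro ⟨g, a⟩ -
      have h1 : (fun i => (Fin.snoc g a : Fin (m+1) → Fin n × Bool) (Fin.castSucc i)) = g := by
        funext i
        rw [Fin.snoc_castSucc]
      have h2 : (Fin.snoc g a : Fin (m+1) → Fin n × Bool) (Fin.last m) = a :=
        Fin.snoc_last _ _
      simp only [h1, h2]
  rw [hcard, Finset.card_sigma]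
  rw [Finset.sum_congr rfl (fun g hg => VN_card T ((mem_E T).mp hg))]
  rw [Finset.sum_const, smul_eq_mul]

lemma E_card (n : ℕ) (m : ℕ) : (E n T m).card = ∏ i ∈ range m, cstep n T i := by
  induction m with
  | zero => rw [E_zero, range_zero, prod_empty]
  | succ m ih => rw [E_succ, ih, prod_range_succ]

lemma prod_rank {N : ℕ} (U : Finset ℕ) (hU : U.card = N) (F : ℕ → ℕ) :
    ∏ m ∈ U, F ((U.filter (fun i => i < m)).card) = ∏ i ∈ range N, F i := by
  have e := U.orderIsoOfFin hU
  have hrank : ∀ ii : Fin N, ((U.filter (fun i => i < (e ii : ℕ))).card) = (ii : ℕ) := by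
    intro ii
    have himg : U.filter (fun i => i < (e ii : ℕ)) =
        (Finset.filter (fun jj : Fin N => jj < ii) univ).image (fun jj => ((e jj : ℕ))) := by
      ext a
      rw [mem_filter, mem_image]
      constructor
      · rintro ⟨ha, hlt⟩
        refine ⟨e.symm ⟨a, ha⟩, ?_, by simp⟩
        rw [mem_filter]
        refine ⟨mem_univ _, ?_⟩
        rw [← e.lt_iff_lt]
        simp only [OrderIso.apply_symm_apply]
        exact hlt
      · rintro ⟨jj, hjj, rfl⟩
        rw [mem_filter] at hjj
        refine ⟨(e jj).2, ?_⟩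
        have := e.lt_iff_lt.mpr hjj.2
        exact this
    have hIio : Finset.filter (fun jj : Fin N => jj < ii) univ = Finset.Iio ii := by
      ext jj
      simp [Finset.mem_Iio]
    rw [himg, card_image_of_injective, hIio, Fin.card_Iio]
    intro a b hab
    exact e.injective (Subtype.ext hab)
  rw [← Fin.prod_univ_eq_prod_range]
  symm
  apply prod_bij (fun (ii : Fin N) _ => ((e ii : ℕ)))
  · intro ii _
    exact (e ii).2
  · intro a _ b _ hab
    exact e.injective (Subtype.ext hab)
  · intro m hm
    exact ⟨e.symm ⟨m, hm⟩, mem_univ _, by simp⟩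
  · intro ii _
    rw [hrank ii]

lemma prod_up (hn : 1 ≤ n) (hcond : ∀ i, 1 ≤ i → i < n → k i ≤ k (i+1) + 1)
    (hlast : k n = 1) :
    ∏ m ∈ range (2*n) \ Dset n k, cstep n (Dset n k) m = 2^n * n.factorial := by
  have hsub : Dset n k ⊆ range (2*n) := fun m hm => mem_range.mpr (Dset_lt hn hcond hlast hm)
  have hcardU : (range (2*n) \ Dset n k).card = n := by
    rw [card_sdiff_of_subset hsub, card_range, card_Dset hcond]
    omega
  have hstep : ∀ m ∈ range (2*n) \ Dset n k,
      cstep n (Dset n k) m =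
        (fun i => 2 * (n - i)) (((range (2*n) \ Dset n k).filter (fun i => i < m)).card) := by
    intro m hm
    rw [mem_sdiff, mem_range] at hm
    have hfe : (range (2*n) \ Dset n k).filter (fun i => i < m)
        = range m \ ((Dset n k).filter (fun i => i < m)) := by
      ext a
      rw [mem_filter, mem_sdiff, mem_sdiff, mem_range, mem_range, mem_filter]
      constructor
      · rintro ⟨⟨-, hnd⟩, hlt⟩
        exact ⟨hlt, fun hc => hnd hc.1⟩
      · rintro ⟨hlt, hnd⟩
        exact ⟨⟨by omega, fun hc => hnd ⟨hc, hlt⟩⟩, hlt⟩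
    have hsub2 : (Dset n k).filter (fun i => i < m) ⊆ range m := by
      intro a ha
      rw [mem_range]
      exact (mem_filter.mp ha).2
    rw [cstep, if_neg hm.2, hfe, card_sdiff_of_subset hsub2, card_range]
    rfl
  rw [prod_congr rfl hstep, prod_rank _ hcardU (fun i => 2 * (n - i))]
  have h1 : ∏ i ∈ range n, (2 * (n - i)) = 2^n * ∏ i ∈ range n, (n - i) := by
    rw [prod_mul_distrib, prod_const, card_range]
  have h2 : ∏ i ∈ range n, (n - i) = n.factorial := by
    calc ∏ j ∈ range n, (n - j)
        = ∏ j ∈ range n, (n - (n - 1 - j)) :=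
          (Finset.prod_range_reflect (fun j => n - j) n).symm
      _ = ∏ j ∈ range n, (j + 1) :=
          prod_congr rfl (fun j hj => by rw [mem_range] at hj; omega)
      _ = n.factorial := Finset.prod_range_add_one_eq_factorial n
  rw [h1, h2]

lemma prod_down (hcond : ∀ i, 1 ≤ i → i < n → k i ≤ k (i+1) + 1) :
    ∏ m ∈ Dset n k, cstep n (Dset n k) m = ∏ j ∈ Icc 1 n, k j := by
  have h0 : ∀ F : ℕ → ℕ, ∏ m ∈ Dset n k, F m = ∏ j ∈ Icc 1 n, F (D k j) := by
    intro F
    rw [Dset]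
    exact prod_image (fun x hx y hy h =>
      D_injOn hcond (by simpa using hx) (by simpa using hy) h)
  rw [h0]
  apply prod_congr rfl
  intro j hj
  rw [mem_Icc] at hj
  have hmem : D k j ∈ Dset n k := mem_image.mpr ⟨j, mem_Icc.mpr hj, rfl⟩
  rw [cstep, if_pos hmem]
  have hd : dct (Dset n k) (D k j) = j - 1 := Dset_filter_card hcond hj.1 hj.2
  rw [hd]
  unfold D
  omega

lemma count_eq (hn : 1 ≤ n) (hcond : ∀ i, 1 ≤ i → i < n → k i ≤ k (i+1) + 1)
    (hlast : k n = 1) :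
    (univ.filter (fun ω : Fin (2*n) ≃ Fin n × Bool =>
        ∀ j, 1 ≤ j → j ≤ n → Kseq (sockPath n ⇑ω) j = (k j : ℤ))).card
      = 2^n * n.factorial * ∏ j ∈ Icc 1 n, k j := by
  have hsub : Dset n k ⊆ range (2*n) := fun m hm => mem_range.mpr (Dset_lt hn hcond hlast hm)
  have hfilter : (univ.filter (fun ω : Fin (2*n) ≃ Fin n × Bool =>
      ∀ j, 1 ≤ j → j ≤ n → Kseq (sockPath n ⇑ω) j = (k j : ℤ)))
      = univ.filter (fun ω : Fin (2*n) ≃ Fin n × Bool => downs n ⇑ω = Dset n k) := by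
    ext ω
    simp only [mem_filter, mem_univ, true_and]
    exact key_iff hn hcond ω
  rw [hfilter]
  have hE : (univ.filter (fun ω : Fin (2*n) ≃ Fin n × Bool => downs n ⇑ω = Dset n k)).card
      = (E n (Dset n k) (2*n)).card := by
    apply card_nbij (fun ω : Fin (2*n) ≃ Fin n × Bool => ⇑ω)
    · intro ω hω
      rw [Finset.mem_coe, mem_filter] at hω
      rw [Finset.mem_coe, mem_E]
      refine ⟨ω.injective, ?_⟩
      intro i
      rw [← hω.2, mem_downs]
      constructor
      · rintro ⟨i', h1, h2⟩
        exact ⟨i.isLt, i', h1, by rw [Fin.eta]; exact h2⟩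
      · rintro ⟨h, i', h1, h2⟩
        rw [Fin.eta] at h2
        exact ⟨i', h1, h2⟩
    · intro a _ b _ hab
      exact Equiv.coe_fn_injective hab
    · intro f hf
      rw [Finset.mem_coe, mem_E] at hf
      have hbij : Function.Bijective f := by
        rw [Fintype.bijective_iff_injective_and_card]
        refine ⟨hf.1, ?_⟩
        simp [Fintype.card_prod]
        omega
      refine ⟨Equiv.ofBijective f hbij, ?_, rfl⟩
      rw [Finset.mem_coe, mem_filter]
      refine ⟨mem_univ _, ?_⟩
      ext m
      rw [mem_downs]
      constructor
      · rintro ⟨h, i', h1, h2⟩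
        exact (hf.2 ⟨m, h⟩).mp ⟨i', h1, h2⟩
      · intro hm
        have hmlt : m < 2*n := Dset_lt hn hcond hlast hm
        obtain ⟨i', h1, h2⟩ := (hf.2 ⟨m, hmlt⟩).mpr hm
        exact ⟨hmlt, i', h1, h2⟩
  rw [hE, E_card, ← prod_sdiff hsub, prod_up hn hcond hlast, prod_down hcond]

end SockAux

open Classical in
/-- If the positive integer tuples `(k 1, …, k n)` and `(k' 1, …, k' n)` both satisfy
condition (1) and are rearrangements of each other, then under the uniform measure on
sock orderings the events `{K_j(x(ω)) = k j for all j}` and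
`{K_j(x(ω)) = k' j for all j}` have the same probability, both equal to
`2^n · n! · (∏ k i) / (2n)!`. -/
theorem stmt_14 (n : ℕ) (hn : 1 ≤ n) (k k' : ℕ → ℕ)
    (hpos : ∀ i, 1 ≤ i → i ≤ n → 0 < k i)
    (hcond : ∀ i, 1 ≤ i → i < n → k i ≤ k (i + 1) + 1) (hlast : k n = 1)
    (hpos' : ∀ i, 1 ≤ i → i ≤ n → 0 < k' i)
    (hcond' : ∀ i, 1 ≤ i → i < n → k' i ≤ k' (i + 1) + 1) (hlast' : k' n = 1)
    (hperm : (Finset.Icc 1 n).val.map k' = (Finset.Icc 1 n).val.map k) :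
    ((Finset.univ.filter fun ω : Fin (2 * n) ≃ Fin n × Bool =>
          ∀ j, 1 ≤ j → j ≤ n → Kseq (sockPath n ⇑ω) j = (k j : ℤ)).card : ℚ) /
        (Nat.factorial (2 * n) : ℚ) =
      ((Finset.univ.filter fun ω : Fin (2 * n) ≃ Fin n × Bool =>
          ∀ j, 1 ≤ j → j ≤ n → Kseq (sockPath n ⇑ω) j = (k' j : ℤ)).card : ℚ) /
        (Nat.factorial (2 * n) : ℚ) ∧
    ((Finset.univ.filter fun ω : Fin (2 * n) ≃ Fin n × Bool =>
          ∀ j, 1 ≤ j → j ≤ n → Kseq (sockPath n ⇑ω) j = (k j : ℤ)).card : ℚ) /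
        (Nat.factorial (2 * n) : ℚ) =
      (2 ^ n * (Nat.factorial n : ℚ) * ∏ i ∈ Finset.Icc 1 n, (k i : ℚ)) /
        (Nat.factorial (2 * n) : ℚ) := by
    classical
  have hcount := SockAux.count_eq (k := k) hn hcond hlast
  have hcount' := SockAux.count_eq (k := k') hn hcond' hlast'
  have hprod : ∏ j ∈ Finset.Icc 1 n, k' j = ∏ j ∈ Finset.Icc 1 n, k j := by
    rw [Finset.prod_eq_multiset_prod, Finset.prod_eq_multiset_prod]
    exact congrArg Multiset.prod hperm
  constructor
  · rw [hcount, hcount', hprod]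
  · rw [hcount]
    push_cast
    ring
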